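/- A vector θ* ∈ ℝ^n solves the ℓ1 problem (i.e., ‖φ(θ*)‖₁ ≤ ‖φ(θ)‖₁ for all θ ∈ ℝ^n) if and only if there exist real numbers λ_t ∈ [−1, 1], t ∈ I⁰(θ*), such that Σ_{t ∈ I⁺(θ*)} x_t − Σ_{t ∈ I⁻(θ*)} x_t = Σ_{t ∈ I⁰(θ*)} λ_t x_t (with the convention that an empty sum equals the zero vector). -/

import Mathlib

open Matrix Finset

private lemma sum_dotProduct' {N n : ℕ} (s : Finset (Fin N)) (f : Fin N → Fin n → ℝ)
    (w : Fin n → ℝ) : (∑ i ∈ s, f i) ⬝ᵥ w = ∑ i ∈ s, f i ⬝ᵥ w := by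
  simp only [dotProduct, Finset.sum_apply, Finset.sum_mul]
  exact Finset.sum_comm

/-- `θ*` solves the ℓ1 problem iff there exist numbers
`λ_t ∈ [-1,1]`, `t ∈ I⁰(θ*)`, such that
`∑_{t ∈ I⁺(θ*)} x_t − ∑_{t ∈ I⁻(θ*)} x_t = ∑_{t ∈ I⁰(θ*)} λ_t x_t`. -/
theorem stmt2 (n N : ℕ) (hn : 1 ≤ n) (hN : 1 ≤ N)
    (x : Fin N → Fin n → ℝ) (y : Fin N → ℝ) (θs : Fin n → ℝ) :
    (∀ θ : Fin n → ℝ, ∑ t, |y t - x t ⬝ᵥ θs| ≤ ∑ t, |y t - x t ⬝ᵥ θ|) ↔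
      (∃ lam : Fin N → ℝ,
        (∀ t ∈ univ.filter (fun t => x t ⬝ᵥ θs = y t), lam t ∈ Set.Icc (-1 : ℝ) 1) ∧
        (∑ t ∈ univ.filter (fun t => x t ⬝ᵥ θs > y t), x t)
          - (∑ t ∈ univ.filter (fun t => x t ⬝ᵥ θs < y t), x t)
          = ∑ t ∈ univ.filter (fun t => x t ⬝ᵥ θs = y t), lam t • x t) := by
  have hNE : Nonempty (Fin N) := ⟨⟨0, hN⟩⟩
  constructor
  · -- forward: optimality ⇒ existence of λ
    intro hopt
    by_contra hno
    push_neg at hno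
    set P := univ.filter (fun t => x t ⬝ᵥ θs > y t) with hP
    set M := univ.filter (fun t => x t ⬝ᵥ θs < y t) with hM
    set Z0 := univ.filter (fun t => x t ⬝ᵥ θs = y t) with hZ0
    set v : Fin n → ℝ := (∑ t ∈ P, x t) - ∑ t ∈ M, x t with hv
    -- the zonotope
    let L : (Fin N → ℝ) →ₗ[ℝ] (Fin n → ℝ) :=
      { toFun := fun lam => ∑ t ∈ Z0, lam t • x t
        map_add' := by
          intro a b
          simp [add_smul, Finset.sum_add_distrib]
        map_smul' := by
          intro c a
          simp only [Pi.smul_apply, smul_eq_mul, RingHom.id_apply, Finset.smul_sum, smul_smul] }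
    set Box : Set (Fin N → ℝ) := Set.pi Set.univ fun _ => Set.Icc (-1 : ℝ) 1 with hBox
    have hvZ : v ∉ L '' Box := by
      rintro ⟨lam, hlam, heq⟩
      exact hno lam (fun t _ => hlam t (Set.mem_univ t)) heq.symm
    have hconv : Convex ℝ (L '' Box) :=
      (convex_pi fun _ _ => convex_Icc _ _).linear_image L
    have hLc : Continuous L := by
      show Continuous fun lam : Fin N → ℝ => ∑ t ∈ Z0, lam t • x t
      exact continuous_finset_sum _ fun t _ => (continuous_apply t).smul continuous_const
    have hcl : IsClosed (L '' Box) :=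
      ((isCompact_univ_pi fun _ => isCompact_Icc).image hLc).isClosed
    obtain ⟨f, u, hfu, hufv⟩ := geometric_hahn_banach_closed_point hconv hcl hvZ
    -- the supremum of f over the zonotope is ∑ |f (x t)|
    set lam0 : Fin N → ℝ := fun t => if 0 ≤ f (x t) then 1 else -1 with hlam0
    have hzmem : L lam0 ∈ L '' Box := by
      refine ⟨lam0, fun t _ => ?_, rfl⟩
      by_cases h : 0 ≤ f (x t) <;> simp [hlam0, h] <;> norm_num
    have hfz : f (L lam0) = ∑ t ∈ Z0, |f (x t)| := by
      have hLl : L lam0 = ∑ t ∈ Z0, lam0 t • x t := rfl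
      rw [hLl, map_sum]
      refine Finset.sum_congr rfl fun t _ => ?_
      rw [f.map_smul, smul_eq_mul]
      by_cases h : 0 ≤ f (x t)
      · simp [hlam0, h, abs_of_nonneg h]
      · push_neg at h
        simp [hlam0, not_le.mpr h, abs_of_neg h]
    have h1 : ∑ t ∈ Z0, |f (x t)| < f v := lt_trans (hfz ▸ hfu _ hzmem) hufv
    have hfv : f v = ∑ t ∈ P, f (x t) - ∑ t ∈ M, f (x t) := by
      rw [hv, map_sub, map_sum, map_sum]
    -- represent f via a direction vector
    have hsingle : ∀ (i : Fin n) (a : ℝ), (Pi.single i a : Fin n → ℝ) = a • (Pi.single i 1 : Fin n → ℝ) := by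
      intro i a
      funext j
      simp [Pi.single_apply, mul_ite]
    have hfd : ∀ w : Fin n → ℝ, f w = ∑ i, w i * f (Pi.single i 1) := by
      intro w
      conv_lhs => rw [← Finset.univ_sum_single w]
      rw [map_sum]
      refine Finset.sum_congr rfl fun i _ => ?_
      rw [hsingle i (w i), f.map_smul, smul_eq_mul]
    set d : Fin n → ℝ := fun i => f (Pi.single i 1) with hd
    have hxd : ∀ w : Fin n → ℝ, w ⬝ᵥ d = f w := by
      intro w
      simp only [dotProduct, hd]
      exact (hfd w).symm
    -- small step size
    set g : Fin N → ℝ := fun t =>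
      if x t ⬝ᵥ θs = y t then 1 else |y t - x t ⬝ᵥ θs| / (|f (x t)| + 1) with hg
    have hNe : (univ : Finset (Fin N)).Nonempty := univ_nonempty
    set ε := univ.inf' hNe g with hε
    have hεpos : 0 < ε := by
      rw [hε, Finset.lt_inf'_iff]
      intro t _
      by_cases h : x t ⬝ᵥ θs = y t
      · simp [hg, h]
      · have h1 : 0 < |y t - x t ⬝ᵥ θs| := by
          rw [abs_pos, sub_ne_zero]
          exact fun hc => h hc.symm
        have h2 : 0 < |f (x t)| + 1 := by positivity
        simp only [hg, if_neg h]
        exact div_pos h1 h2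
    have hbound : ∀ t, x t ⬝ᵥ θs ≠ y t → ε * |f (x t)| < |y t - x t ⬝ᵥ θs| := by
      intro t ht
      have hle : ε ≤ g t := Finset.inf'_le _ (mem_univ t)
      have h2 : 0 < |f (x t)| + 1 := by positivity
      rw [hg] at hle
      simp only [if_neg ht] at hle
      have h3 : ε * (|f (x t)| + 1) ≤ |y t - x t ⬝ᵥ θs| := by
        rw [← le_div_iff₀ h2] at *
        exact hle
      nlinarith [hεpos]
    -- the perturbed point
    set θ' : Fin n → ℝ := θs - ε • d with hθ'
    have hxθ : ∀ t, x t ⬝ᵥ θ' = x t ⬝ᵥ θs - ε * f (x t) := by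
      intro t
      rw [hθ', dotProduct_sub, dotProduct_smul, smul_eq_mul, hxd]
    set c : Fin N → ℝ := fun t =>
      if x t ⬝ᵥ θs > y t then f (x t)
      else if x t ⬝ᵥ θs < y t then -f (x t) else -|f (x t)| with hc
    have hterm : ∀ t, |y t - x t ⬝ᵥ θ'| = |y t - x t ⬝ᵥ θs| - ε * c t := by
      intro t
      rw [hxθ]
      rcases lt_trichotomy (x t ⬝ᵥ θs) (y t) with h | h | h
      · -- residual positive
        have hb := hbound t (ne_of_lt h)
        have he : 0 < y t - x t ⬝ᵥ θs := by linarith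
        rw [abs_of_pos he] at hb
        have habs2 : 0 < y t - (x t ⬝ᵥ θs - ε * f (x t)) := by
          have := neg_abs_le (f (x t))
          nlinarith [hεpos]
        rw [abs_of_pos habs2, abs_of_pos he]
        simp only [hc, if_neg (not_lt.mpr h.le), if_pos h]
        ring
      · -- residual zero
        have hc0 : c t = -|f (x t)| := by
          simp [hc, not_lt.mpr h.le, not_lt.mpr h.ge]
        rw [hc0, h, show y t - (y t - ε * f (x t)) = ε * f (x t) by ring, sub_self, abs_zero,
          abs_mul, abs_of_pos hεpos]
        ring
      · -- residual negative
        have hb := hbound t (ne_of_gt h)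
        have he : y t - x t ⬝ᵥ θs < 0 := by linarith
        rw [abs_of_neg he] at hb
        have habs2 : y t - (x t ⬝ᵥ θs - ε * f (x t)) < 0 := by
          have := le_abs_self (f (x t))
          nlinarith [hεpos]
        rw [abs_of_neg habs2, abs_of_neg he]
        simp only [hc, if_pos h]
        ring
    have hcsum : ∑ t, c t = f v - ∑ t ∈ Z0, |f (x t)| := by
      rw [hfv, hP, hM, hZ0, Finset.sum_filter, Finset.sum_filter, Finset.sum_filter,
        ← Finset.sum_sub_distrib, ← Finset.sum_sub_distrib]
      refine Finset.sum_congr rfl fun t _ => ?_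
      rcases lt_trichotomy (x t ⬝ᵥ θs) (y t) with h | h | h
      · simp [hc, not_lt.mpr h.le, h, ne_of_lt h]
      · simp [hc, not_lt.mpr h.le, not_lt.mpr h.ge, h]
      · simp [hc, h, not_lt.mpr h.le, (ne_of_gt h)]
    have hlt : ∑ t, |y t - x t ⬝ᵥ θ'| < ∑ t, |y t - x t ⬝ᵥ θs| := by
      have hrw : ∑ t, |y t - x t ⬝ᵥ θ'| = ∑ t, |y t - x t ⬝ᵥ θs| - ε * ∑ t, c t := by
        rw [Finset.mul_sum, ← Finset.sum_sub_distrib]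
        exact Finset.sum_congr rfl fun t _ => hterm t
      rw [hrw, hcsum]
      have : 0 < ε * (f v - ∑ t ∈ Z0, |f (x t)|) := mul_pos hεpos (by linarith)
      linarith
    exact absurd (hopt θ') (not_le.mpr hlt)
  · -- backward: existence of λ ⇒ optimality
    rintro ⟨lam, hlam, hsum⟩ θ
    set σ : Fin N → ℝ := fun t =>
      if x t ⬝ᵥ θs > y t then -1 else if x t ⬝ᵥ θs < y t then 1 else lam t with hσ
    have hσx : ∑ t, σ t • x t = 0 := by
      have h0 : ∑ t, σ t • x t
          = (∑ t ∈ univ.filter (fun t => x t ⬝ᵥ θs = y t), lam t • x t)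
            - ((∑ t ∈ univ.filter (fun t => x t ⬝ᵥ θs > y t), x t)
               - (∑ t ∈ univ.filter (fun t => x t ⬝ᵥ θs < y t), x t)) := by
        rw [Finset.sum_filter, Finset.sum_filter, Finset.sum_filter,
          ← Finset.sum_sub_distrib, ← Finset.sum_sub_distrib]
        refine Finset.sum_congr rfl fun t _ => ?_
        rcases lt_trichotomy (x t ⬝ᵥ θs) (y t) with h | h | h
        · simp [hσ, not_lt.mpr h.le, h, ne_of_lt h]
        · simp [hσ, not_lt.mpr h.le, not_lt.mpr h.ge, h]
        · simp [hσ, h, not_lt.mpr h.le, (ne_of_gt h)]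
      rw [h0, ← hsum, sub_self]
    have hdot : ∀ w : Fin n → ℝ, ∑ t, σ t * (x t ⬝ᵥ w) = 0 := by
      intro w
      have : ∑ t, σ t * (x t ⬝ᵥ w) = (∑ t, σ t • x t) ⬝ᵥ w := by
        rw [sum_dotProduct']
        exact Finset.sum_congr rfl fun t _ => by rw [smul_dotProduct, smul_eq_mul]
      rw [this, hσx, zero_dotProduct]
    have h1 : ∑ t, |y t - x t ⬝ᵥ θs| = ∑ t, σ t * (y t - x t ⬝ᵥ θs) := by
      refine Finset.sum_congr rfl fun t _ => ?_
      rcases lt_trichotomy (x t ⬝ᵥ θs) (y t) with h | h | h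
      · have he : 0 < y t - x t ⬝ᵥ θs := by linarith
        rw [abs_of_pos he]
        simp [hσ, not_lt.mpr h.le, h]
      · simp [hσ, h]
      · have he : y t - x t ⬝ᵥ θs < 0 := by linarith
        rw [abs_of_neg he]
        simp [hσ, h]
    have h2 : ∑ t, σ t * (y t - x t ⬝ᵥ θs) = ∑ t, σ t * (y t - x t ⬝ᵥ θ) := by
      rw [← sub_eq_zero, ← Finset.sum_sub_distrib]
      have hrw : ∀ t : Fin N,
          σ t * (y t - x t ⬝ᵥ θs) - σ t * (y t - x t ⬝ᵥ θ) = σ t * (x t ⬝ᵥ (θ - θs)) := by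
        intro t
        rw [dotProduct_sub]
        ring
      rw [Finset.sum_congr rfl fun t _ => hrw t]
      exact hdot _
    have habs : ∀ t, |σ t| ≤ 1 := by
      intro t
      rcases lt_trichotomy (x t ⬝ᵥ θs) (y t) with h | h | h
      · simp [hσ, not_lt.mpr h.le, h]
      · have hmem := hlam t (Finset.mem_filter.mpr ⟨mem_univ t, h⟩)
        rw [Set.mem_Icc] at hmem
        simp only [hσ, if_neg (not_lt.mpr h.le), if_neg (not_lt.mpr h.ge)]
        exact abs_le.mpr hmem
      · simp [hσ, h]
    rw [h1, h2]
    refine Finset.sum_le_sum fun t _ => ?_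
    calc σ t * (y t - x t ⬝ᵥ θ) ≤ |σ t * (y t - x t ⬝ᵥ θ)| := le_abs_self _
      _ = |σ t| * |y t - x t ⬝ᵥ θ| := abs_mul _ _
      _ ≤ 1 * |y t - x t ⬝ᵥ θ| := by
          exact mul_le_mul_of_nonneg_right (habs t) (abs_nonneg _)
      _ = |y t - x t ⬝ᵥ θ| := one_mul _
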